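/- Let G be a finite connected network with distinct positive edge-lengths, T its MST, and T' a spanning tree with |T' \ T| = k ≥ 1. Then there exist edges e' ∈ T' \ T and e ∈ T \ T' such that: (i) T* = T' \ {e'} ∪ {e} is a spanning tree; (ii) |T* \ T| = k - 1; and (iii) len(e') - len(e) ≥ exc(e'). -/

import Mathlib

open SimpleGraph Finset

/-- The subgraph of `G` consisting of edges of length `< t`. -/
def Gt {V : Type*} (G : SimpleGraph V) (len : Sym2 V → ℝ) (t : ℝ) : SimpleGraph V where
  Adj v w := G.Adj v w ∧ len s(v, w) < t
  symm := ⟨fun v w h => ⟨h.1.symm, by rw [Sym2.eq_swap]; exact h.2⟩⟩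
  loopless := ⟨fun v h => G.loopless.irrefl v h.1⟩

/-- `perc(v,w)`: the infimum of `t` such that `v` and `w` lie in the same component of `G_t`. -/
noncomputable def perc {V : Type*} (G : SimpleGraph V) (len : Sym2 V → ℝ) (v w : V) : ℝ :=
  sInf {t | (Gt G len t).Reachable v w}

/-- `T` (a finite set of edges) is a spanning tree of `G`. -/
def IsST {V : Type*} (G : SimpleGraph V) (T : Finset (Sym2 V)) : Prop :=
  ↑T ⊆ G.edgeSet ∧ (SimpleGraph.fromEdgeSet (↑T : Set (Sym2 V))).IsTree

/-- Total length of a set of edges. -/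
noncomputable def lenSum {V : Type*} (len : Sym2 V → ℝ) (T : Finset (Sym2 V)) : ℝ :=
  ∑ e ∈ T, len e

/-- `T` is a minimum spanning tree of `G`. -/
def IsMST {V : Type*} (G : SimpleGraph V) (len : Sym2 V → ℝ) (T : Finset (Sym2 V)) : Prop :=
  IsST G T ∧ ∀ T', IsST G T' → lenSum len T ≤ lenSum len T'

/-- `percE e`: `perc(v,w)` for an edge `e = (v,w)`. -/
noncomputable def percE {V : Type*} (G : SimpleGraph V) (len : Sym2 V → ℝ) (e : Sym2 V) : ℝ :=
  sInf {t | ∃ v w, e = s(v, w) ∧ (Gt G len t).Reachable v w}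

section AuxLemmas

variable {V : Type*}

/-- A path from inside `A` to outside `A` contains a crossing edge, and the pieces of the
path before and after the crossing edge avoid it. -/
lemma cross_split {G : SimpleGraph V} (A : Set V) :
    ∀ {x y : V} (p : G.Walk x y), p.IsPath → x ∈ A → y ∉ A →
    ∃ c d, G.Adj c d ∧ c ∈ A ∧ d ∉ A ∧ s(c, d) ∈ p.edges ∧
      ∃ (q : G.Walk x c) (r : G.Walk d y), s(c, d) ∉ q.edges ∧ s(c, d) ∉ r.edges := by
  intro x y p
  induction p with
  | nil => exact fun _ hx hy => absurd hx hy
  | @cons x b y h q ih =>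
    intro hp hx hy
    by_cases hb : b ∈ A
    · obtain ⟨c, d, hcd, hc, hd, hmem, qq, rr, hq, hr⟩ := ih hp.of_cons hb hy
      have hxs : x ∉ q.support := ((Walk.cons_isPath_iff h q).mp hp).2
      have hne : s(c, d) ≠ s(x, b) := by
        intro hEq
        rcases Sym2.eq_iff.mp hEq with ⟨h1, _⟩ | ⟨_, h2⟩
        · exact hxs (h1 ▸ Walk.fst_mem_support_of_mem_edges q hmem)
        · exact hxs (h2 ▸ Walk.snd_mem_support_of_mem_edges q hmem)
      refine ⟨c, d, hcd, hc, hd, by simp [hmem], Walk.cons h qq, rr, ?_, hr⟩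
      intro hmm
      rw [Walk.edges_cons, List.mem_cons] at hmm
      rcases hmm with h' | h'
      · exact hne h'
      · exact hq h'
    · refine ⟨x, b, h, hx, hb, by simp, Walk.nil, q, by simp, ?_⟩
      intro hmm
      exact ((Walk.cons_isPath_iff h q).mp hp).2 (Walk.fst_mem_support_of_mem_edges q hmm)

/-- A walk avoiding an edge `f` yields reachability in the graph with `f` erased. -/
lemma reach_of_avoid [DecidableEq V] {S : Finset (Sym2 V)} {f : Sym2 V} {x y : V}
    (r : (fromEdgeSet (↑S : Set (Sym2 V))).Walk x y) (hf : f ∉ r.edges) :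
    (fromEdgeSet (↑(S.erase f) : Set (Sym2 V))).Reachable x y := by
  refine ⟨r.transfer _ fun e he => ?_⟩
  have h1 := r.edges_subset_edgeSet he
  rw [edgeSet_fromEdgeSet] at h1 ⊢
  refine ⟨?_, h1.2⟩
  simp only [Finset.coe_erase, Set.mem_diff, Set.mem_singleton_iff]
  exact ⟨h1.1, fun h => hf (h ▸ he)⟩

/-- In a tree, erasing an edge disconnects its endpoints. -/
lemma tree_not_reach_erase [DecidableEq V] {S : Finset (Sym2 V)}
    (hS : (fromEdgeSet (↑S : Set (Sym2 V))).IsTree) {c d : V}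
    (hcd : (fromEdgeSet (↑S : Set (Sym2 V))).Adj c d) :
    ¬ (fromEdgeSet (↑(S.erase s(c, d)) : Set (Sym2 V))).Reachable c d := by
  have hbr := (isAcyclic_iff_forall_adj_isBridge.mp hS.IsAcyclic) hcd
  rw [isBridge_iff] at hbr
  intro hre
  apply hbr
  refine hre.mono fun x y hxy => ?_
  rw [fromEdgeSet_adj] at hxy
  simp only [Finset.coe_erase, Set.mem_diff, Set.mem_singleton_iff] at hxy
  rw [deleteEdges_adj, fromEdgeSet_adj]
  exact ⟨⟨hxy.1.1, hxy.2⟩, fun hc => hxy.1.2 hc⟩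

/-- In a tree, after erasing an edge every vertex is reachable from one of its endpoints. -/
lemma tree_erase_dichotomy [DecidableEq V] {S : Finset (Sym2 V)}
    (hS : (fromEdgeSet (↑S : Set (Sym2 V))).IsTree) {c d : V}
    (hcd : (fromEdgeSet (↑S : Set (Sym2 V))).Adj c d) (x : V) :
    (fromEdgeSet (↑(S.erase s(c, d)) : Set (Sym2 V))).Reachable c x ∨
      (fromEdgeSet (↑(S.erase s(c, d)) : Set (Sym2 V))).Reachable d x := by
  classical
  by_cases hx : (fromEdgeSet (↑(S.erase s(c, d)) : Set (Sym2 V))).Reachable c x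
  · exact .inl hx
  right
  set A : Set V := {y | (fromEdgeSet (↑(S.erase s(c, d)) : Set (Sym2 V))).Reachable c y} with hA
  obtain ⟨wcx⟩ := hS.isConnected.preconnected c x
  obtain ⟨p, q, hpq, hpA, hqA, _, qq, rr, hq, hr⟩ :=
    cross_split A wcx.toPath.1 wcx.toPath.2 (Reachable.refl c) hx
  have hgf : s(p, q) = s(c, d) := by
    by_contra hgf
    apply hqA
    refine hpA.trans (Adj.reachable ?_)
    rw [fromEdgeSet_adj]
    simp only [Finset.coe_erase, Set.mem_diff, Set.mem_singleton_iff]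
    exact ⟨⟨((fromEdgeSet_adj _).mp hpq).1, hgf⟩, hpq.ne⟩
  rcases Sym2.eq_iff.mp hgf with ⟨h1, h2⟩ | ⟨h1, h2⟩
  · subst h1; subst h2
    exact (reach_of_avoid rr (hgf ▸ hr))
  · exact absurd (show q ∈ A by rw [h2]; exact Reachable.refl c) hqA

/-- The exchange lemma: swapping an edge of a spanning tree for an edge reconnecting the two
pieces yields a spanning tree. -/
lemma swap_isST [Fintype V] [Nonempty V] [DecidableEq V] {G : SimpleGraph V}
    {S : Finset (Sym2 V)} (hS : IsST G S) {c d : V} (hf : s(c, d) ∈ S)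
    {a b : V} (hab : G.Adj a b)
    (hnr : ¬ (fromEdgeSet (↑(S.erase s(c, d)) : Set (Sym2 V))).Reachable a b) :
    IsST G (insert s(a, b) (S.erase s(c, d))) := by
  classical
  obtain ⟨hSsub, hTr⟩ := hS
  have hcd : (fromEdgeSet (↑S : Set (Sym2 V))).Adj c d := by
    rw [fromEdgeSet_adj]
    refine ⟨hf, fun h => ?_⟩
    exact (G.not_isDiag_of_mem_edgeSet (hSsub hf)) (by simp [h])
  set N := insert s(a, b) (S.erase s(c, d)) with hN
  have hsub : ↑N ⊆ G.edgeSet := by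
    intro g hg
    rcases Finset.mem_insert.mp (Finset.mem_coe.mp hg) with h | h
    · rw [h]; exact hab
    · exact hSsub (Finset.mem_coe.mpr (Finset.mem_of_mem_erase h))
  have hle : fromEdgeSet (↑(S.erase s(c, d)) : Set (Sym2 V)) ≤ fromEdgeSet (↑N : Set (Sym2 V)) := by
    apply fromEdgeSet_mono
    intro g hg
    exact Finset.mem_coe.mpr (Finset.mem_insert_of_mem (Finset.mem_coe.mp hg))
  have habN : (fromEdgeSet (↑N : Set (Sym2 V))).Adj a b :=
    (fromEdgeSet_adj _).mpr ⟨Finset.mem_coe.mpr (Finset.mem_insert_self _ _), hab.ne⟩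
  have hdich := fun x => tree_erase_dichotomy hTr hcd x
  have hR : ∀ x y, (fromEdgeSet (↑(S.erase s(c, d)) : Set (Sym2 V))).Reachable x y →
      (fromEdgeSet (↑N : Set (Sym2 V))).Reachable x y := fun x y h => h.mono hle
  have hcdN : (fromEdgeSet (↑N : Set (Sym2 V))).Reachable c d := by
    rcases hdich a with ha | ha <;> rcases hdich b with hb | hb
    · exact absurd (ha.symm.trans hb) hnr
    · exact ((hR _ _ ha).trans habN.reachable).trans (hR _ _ hb).symm
    · exact ((hR _ _ hb).trans habN.symm.reachable).trans (hR _ _ ha).symm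
    · exact absurd (ha.symm.trans hb) hnr
  have hreach : ∀ x, (fromEdgeSet (↑N : Set (Sym2 V))).Reachable c x := by
    intro x
    rcases hdich x with h | h
    · exact hR _ _ h
    · exact hcdN.trans (hR _ _ h)
  have hconn : (fromEdgeSet (↑N : Set (Sym2 V))).Connected := by
    rw [connected_iff]
    exact ⟨fun x y => (hreach x).symm.trans (hreach y), ‹Nonempty V›⟩
  have hacyc : IsAcyclic (fromEdgeSet (↑N : Set (Sym2 V))) := by
    intro u cyc hcyc
    by_cases hmem : s(a, b) ∈ cyc.edges
    · have h2 : ((fromEdgeSet (↑N : Set (Sym2 V))) \ fromEdgeSet {s(a, b)}).Reachable a b :=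
        (adj_and_reachable_delete_edges_iff_exists_cycle.mpr ⟨u, cyc, hcyc, hmem⟩).2
      apply hnr
      refine h2.mono fun x y hxy => ?_
      rw [sdiff_adj, fromEdgeSet_adj, fromEdgeSet_adj] at hxy
      rw [fromEdgeSet_adj]
      have hne : s(x, y) ≠ s(a, b) := fun h => hxy.2 ⟨by simp [h], hxy.1.2⟩
      rcases Finset.mem_insert.mp (Finset.mem_coe.mp hxy.1.1) with h | h
      · exact absurd h hne
      · exact ⟨Finset.mem_coe.mpr h, hxy.1.2⟩
    · have hsub2 : ∀ e ∈ cyc.edges, e ∈ (fromEdgeSet (↑S : Set (Sym2 V))).edgeSet := by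
        intro e he
        have h1 := cyc.edges_subset_edgeSet he
        rw [edgeSet_fromEdgeSet] at h1 ⊢
        refine ⟨?_, h1.2⟩
        rcases Finset.mem_insert.mp (Finset.mem_coe.mp h1.1) with h | h
        · exact absurd (h ▸ he) hmem
        · exact Finset.mem_coe.mpr (Finset.mem_of_mem_erase h)
      exact hTr.IsAcyclic (cyc.transfer _ hsub2) (hcyc.transfer hsub2)
  exact ⟨hsub, hconn, hacyc⟩

end AuxLemmas

/-- Exchange step: if `T` is the MST and `T'` a spanning tree with `|T' \ T| = k ≥ 1`, then
there are `e' ∈ T' \ T` and `e ∈ T \ T'` such that `T* = T' \ {e'} ∪ {e}` is a spanning tree,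
`|T* \ T| = k - 1`, and `len(e') - len(e) ≥ exc(e')`. -/
theorem mst_exchange_step {V : Type*} [Fintype V] [Nonempty V] [DecidableEq V]
    (G : SimpleGraph V) (hG : G.Connected) (len : Sym2 V → ℝ)
    (hpos : ∀ e ∈ G.edgeSet, 0 < len e) (hdist : Set.InjOn len G.edgeSet)
    (T T' : Finset (Sym2 V)) (hT : IsMST G len T) (hT' : IsST G T')
    (k : ℕ) (hk : 1 ≤ k) (hcard : (T' \ T).card = k) :
    ∃ e' ∈ T' \ T, ∃ e ∈ T \ T',
      IsST G (insert e (T'.erase e')) ∧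
      ((insert e (T'.erase e')) \ T).card = k - 1 ∧
      len e' - len e ≥ len e' - percE G len e' := by
  classical
  obtain ⟨e', he'⟩ := Finset.card_pos.mp (by rw [hcard]; exact hk)
  revert he'
  induction e' using Sym2.ind with
  | _ v w =>
  intro he'
  obtain ⟨he'T', he'T⟩ := Finset.mem_sdiff.mp he'
  have he'G : s(v, w) ∈ G.edgeSet := hT'.1 he'T'
  have hvw : G.Adj v w := he'G
  have hvwT' : (fromEdgeSet (↑T' : Set (Sym2 V))).Adj v w :=
    (fromEdgeSet_adj _).mpr ⟨he'T', hvw.ne⟩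
  set H' := fromEdgeSet (↑(T'.erase s(v, w)) : Set (Sym2 V)) with hH'
  set A : Set V := {x | H'.Reachable v x} with hA
  have hAv : v ∈ A := Reachable.refl v
  have hAw : w ∉ A := tree_not_reach_erase hT'.2 hvwT'
  have hAcl : ∀ {x y : V}, x ∈ A → H'.Adj x y → y ∈ A :=
    fun hx h => Reachable.trans hx h.reachable
  set cross := G.edgeFinset.filter (fun g => ∃ c d : V, g = s(c, d) ∧ c ∈ A ∧ d ∉ A)
    with hcrossdef
  have hcrossNe : cross.Nonempty := by
    obtain ⟨wvw⟩ := hG.preconnected v w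
    obtain ⟨c, d, hcd, hc, hd, -, -, -, -, -⟩ :=
      cross_split A wvw.toPath.1 wvw.toPath.2 hAv hAw
    exact ⟨s(c, d), Finset.mem_filter.mpr ⟨mem_edgeFinset.mpr hcd, c, d, rfl, hc, hd⟩⟩
  obtain ⟨e, heCross, hemin⟩ := cross.exists_min_image len hcrossNe
  obtain ⟨heG, a, b, heq, haA, hbA⟩ := Finset.mem_filter.mp heCross
  subst heq
  have hab : G.Adj a b := mem_edgeFinset.mp heG
  -- lower bound for percE
  have hlow : ∀ t ∈ {t | ∃ p q, s(v, w) = s(p, q) ∧ (Gt G len t).Reachable p q},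
      len s(a, b) ≤ t := by
    rintro t ⟨p, q, hpq, hre⟩
    have hre' : (Gt G len t).Reachable v w := by
      rcases Sym2.eq_iff.mp hpq with ⟨h1, h2⟩ | ⟨h1, h2⟩
      · rw [h1, h2]; exact hre
      · rw [h1, h2]; exact hre.symm
    obtain ⟨wk⟩ := hre'
    obtain ⟨c, d, hcd, hc, hd, -, -, -, -, -⟩ :=
      cross_split A wk.toPath.1 wk.toPath.2 hAv hAw
    have hmem : s(c, d) ∈ cross :=
      Finset.mem_filter.mpr ⟨mem_edgeFinset.mpr hcd.1, c, d, rfl, hc, hd⟩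
    exact le_of_lt (lt_of_le_of_lt (hemin _ hmem) hcd.2)
  -- the minimal crossing edge lies in the MST
  have heT : s(a, b) ∈ T := by
    by_contra heT
    obtain ⟨wab⟩ := hT.1.2.isConnected.preconnected a b
    obtain ⟨c, d, hcd, hc, hd, -, q, r, hq, hr⟩ :=
      cross_split A wab.toPath.1 wab.toPath.2 haA hbA
    have hfT : s(c, d) ∈ T := ((fromEdgeSet_adj _).mp hcd).1
    have hfG : s(c, d) ∈ G.edgeSet := hT.1.1 hfT
    have hfcross : s(c, d) ∈ cross :=
      Finset.mem_filter.mpr ⟨mem_edgeFinset.mpr hfG, c, d, rfl, hc, hd⟩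
    have hne : s(a, b) ≠ s(c, d) := fun h => heT (h ▸ hfT)
    have hlt : len s(a, b) < len s(c, d) :=
      lt_of_le_of_ne (hemin _ hfcross) (fun h => hne (hdist hab hfG h))
    have hnr : ¬ (fromEdgeSet (↑(T.erase s(c, d)) : Set (Sym2 V))).Reachable a b := by
      intro hre
      exact tree_not_reach_erase hT.1.2 hcd
        (((reach_of_avoid q hq).symm.trans hre).trans (reach_of_avoid r hr).symm)
    have hST2 := swap_isST hT.1 hfT hab hnr
    have hsum : lenSum len (insert s(a, b) (T.erase s(c, d))) =
        len s(a, b) + (lenSum len T - len s(c, d)) := by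
      simp only [lenSum]
      rw [Finset.sum_insert (fun h => heT (Finset.mem_of_mem_erase h))]
      have h2 := Finset.sum_erase_add T len hfT
      linarith
    have hge := hT.2 _ hST2
    rw [hsum] at hge
    simp only [lenSum] at hge hlt
    linarith
  have heT' : s(a, b) ∉ T' := by
    intro h
    have hne : s(a, b) ≠ s(v, w) := fun hh => he'T (hh ▸ heT)
    have hadj : H'.Adj a b := (fromEdgeSet_adj _).mpr
      ⟨Finset.mem_coe.mpr (Finset.mem_erase.mpr ⟨hne, h⟩), hab.ne⟩
    exact hbA (hAcl haA hadj)
  have hnr' : ¬ H'.Reachable a b := fun h => hbA (Reachable.trans haA h)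
  have hSTstar := swap_isST hT' he'T' hab hnr'
  refine ⟨s(v, w), he', s(a, b), Finset.mem_sdiff.mpr ⟨heT, heT'⟩, hSTstar, ?_, ?_⟩
  · have hset : (insert s(a, b) (T'.erase s(v, w))) \ T = (T' \ T).erase s(v, w) := by
      ext g
      simp only [Finset.mem_sdiff, Finset.mem_insert, Finset.mem_erase]
      constructor
      · rintro ⟨h1 | h1, h2⟩
        · exact absurd (h1 ▸ heT) h2
        · exact ⟨h1.1, h1.2, h2⟩
      · rintro ⟨h1, h2, h3⟩
        exact ⟨Or.inr ⟨h1, h2⟩, h3⟩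
    rw [hset, Finset.card_erase_of_mem he', hcard]
  · have hNe : {t | ∃ p q, s(v, w) = s(p, q) ∧ (Gt G len t).Reachable p q}.Nonempty := by
      have hne : (G.edgeFinset.image len).Nonempty :=
        ⟨len s(v, w), Finset.mem_image_of_mem len (mem_edgeFinset.mpr he'G)⟩
      set M := (G.edgeFinset.image len).max' hne with hM
      refine ⟨M + 1, v, w, rfl, ?_⟩
      have hle : G ≤ Gt G len (M + 1) := by
        intro x y hxy
        refine ⟨hxy, lt_of_le_of_lt (Finset.le_max' _ _ ?_) (lt_add_one M)⟩
        exact Finset.mem_image_of_mem len (mem_edgeFinset.mpr hxy)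
      exact (hG.preconnected v w).mono hle
    have hle : len s(a, b) ≤ percE G len s(v, w) := le_csInf hNe hlow
    exact sub_le_sub_left hle _
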